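/- Let a > 0 and let W ⊆ ℝ² × (0,∞) be an open set with coordinates (x,y,z). Then the Riemannian metric g = z² dx² + (e^{2ax}/z²) dy² + dz² on W is locally conformally flat. -/

import Mathlib

open scoped ContDiff Matrix

/-- The Jacobian matrix of a map `ψ : ℝ³ → ℝ³` at a point. -/
noncomputable def Dmat (ψ : (Fin 3 → ℝ) → (Fin 3 → ℝ)) (q : Fin 3 → ℝ) :
    Matrix (Fin 3) (Fin 3) ℝ :=
  fun i j => fderiv ℝ ψ q (Pi.single j 1) i

/-- A smooth metric `G` on an open set `U ⊆ ℝ³` is locally conformally flat if every point of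
`U` has an open neighborhood `V ⊆ U` carrying a smooth positive function `lam` and a smooth
injective map `ψ : V → ℝ³` with `(Dψ)ᵀ (Dψ) = lam • G` on `V`. -/
def IsLocConfFlat (U : Set (Fin 3 → ℝ)) (G : (Fin 3 → ℝ) → Matrix (Fin 3) (Fin 3) ℝ) : Prop :=
  ∀ p ∈ U, ∃ V : Set (Fin 3 → ℝ), IsOpen V ∧ p ∈ V ∧ V ⊆ U ∧
    ∃ (lam : (Fin 3 → ℝ) → ℝ) (ψ : (Fin 3 → ℝ) → (Fin 3 → ℝ)),
      ContDiffOn ℝ ∞ lam V ∧ (∀ q ∈ V, 0 < lam q) ∧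
      ContDiffOn ℝ ∞ ψ V ∧ Set.InjOn ψ V ∧
      ∀ q ∈ V, (Dmat ψ q)ᵀ * (Dmat ψ q) = lam q • G q

/-- radius function -/
noncomputable def rho (a : ℝ) (q : Fin 3 → ℝ) : ℝ :=
  (q 2) ^ 2 * Real.exp (-(a * q 0)) * (Real.sqrt (4 + a ^ 2))⁻¹

/-- angle function -/
noncomputable def th (a : ℝ) (q : Fin 3 → ℝ) : ℝ := 2 * q 0 + a * Real.log (q 2)

/-- conformal chart -/
noncomputable def psi (a : ℝ) (q : Fin 3 → ℝ) : Fin 3 → ℝ :=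
  ![rho a q * Real.cos (th a q), rho a q * Real.sin (th a q), q 1]

/-- Jacobian entries of `psi` -/
noncomputable def pd (a : ℝ) (q : Fin 3 → ℝ) : Matrix (Fin 3) (Fin 3) ℝ :=
  ![![rho a q * (-(a * Real.cos (th a q)) - 2 * Real.sin (th a q)), 0,
      rho a q / q 2 * (2 * Real.cos (th a q) - a * Real.sin (th a q))],
    ![rho a q * (-(a * Real.sin (th a q)) + 2 * Real.cos (th a q)), 0,
      rho a q / q 2 * (2 * Real.sin (th a q) + a * Real.cos (th a q))],
    ![0, 1, 0]]

lemma sqrt_ne (a : ℝ) : Real.sqrt (4 + a ^ 2) ≠ 0 := by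
  positivity

lemma hasFDeriv_psi (a : ℝ) (q : Fin 3 → ℝ) (hq : 0 < q 2) :
    HasFDerivAt (psi a) (ContinuousLinearMap.pi fun i =>
      pd a q i 0 • ContinuousLinearMap.proj (R := ℝ) (φ := fun _ : Fin 3 => ℝ) 0 +
      pd a q i 1 • ContinuousLinearMap.proj (R := ℝ) (φ := fun _ : Fin 3 => ℝ) 1 +
      pd a q i 2 • ContinuousLinearMap.proj (R := ℝ) (φ := fun _ : Fin 3 => ℝ) 2) q := by
  have hx : HasFDerivAt (fun q : Fin 3 → ℝ => q 0)
      (ContinuousLinearMap.proj (R := ℝ) (φ := fun _ : Fin 3 => ℝ) 0) q :=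
    hasFDerivAt_apply 0 q
  have hy : HasFDerivAt (fun q : Fin 3 → ℝ => q 1)
      (ContinuousLinearMap.proj (R := ℝ) (φ := fun _ : Fin 3 => ℝ) 1) q :=
    hasFDerivAt_apply 1 q
  have hz : HasFDerivAt (fun q : Fin 3 → ℝ => q 2)
      (ContinuousLinearMap.proj (R := ℝ) (φ := fun _ : Fin 3 => ℝ) 2) q :=
    hasFDerivAt_apply 2 q
  have hsq : HasFDerivAt (fun q : Fin 3 → ℝ => (q 2) ^ 2)
      (q 2 • ContinuousLinearMap.proj (R := ℝ) (φ := fun _ : Fin 3 => ℝ) 2 +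
       q 2 • ContinuousLinearMap.proj (R := ℝ) (φ := fun _ : Fin 3 => ℝ) 2) q := by
    simp only [pow_two]; exact hz.mul hz
  have hneg : HasFDerivAt (fun q : Fin 3 → ℝ => -(a * q 0))
      (-(a • ContinuousLinearMap.proj (R := ℝ) (φ := fun _ : Fin 3 => ℝ) 0)) q := by
    exact (hx.const_mul a).neg
  have hexp : HasFDerivAt (fun q : Fin 3 → ℝ => Real.exp (-(a * q 0)))
      (Real.exp (-(a * q 0)) • (-(a • ContinuousLinearMap.proj (R := ℝ)
        (φ := fun _ : Fin 3 => ℝ) 0))) q :=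
    (Real.hasDerivAt_exp _).comp_hasFDerivAt q hneg
  have hrho : HasFDerivAt (rho a)
      ((Real.sqrt (4 + a ^ 2))⁻¹ • ((q 2) ^ 2 • (Real.exp (-(a * q 0)) •
          (-(a • ContinuousLinearMap.proj (R := ℝ) (φ := fun _ : Fin 3 => ℝ) 0))) +
        Real.exp (-(a * q 0)) • (q 2 • ContinuousLinearMap.proj (R := ℝ)
          (φ := fun _ : Fin 3 => ℝ) 2 + q 2 • ContinuousLinearMap.proj (R := ℝ)
          (φ := fun _ : Fin 3 => ℝ) 2))) q :=
    (hsq.mul hexp).mul_const _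
  have hlog : HasFDerivAt (fun q : Fin 3 → ℝ => Real.log (q 2))
      ((q 2)⁻¹ • ContinuousLinearMap.proj (R := ℝ) (φ := fun _ : Fin 3 => ℝ) 2) q :=
    by have h := (Real.hasDerivAt_log hq.ne').comp_hasFDerivAt q hz; exact h
  have hth : HasFDerivAt (th a)
      ((2 : ℝ) • ContinuousLinearMap.proj (R := ℝ) (φ := fun _ : Fin 3 => ℝ) 0 +
        a • ((q 2)⁻¹ • ContinuousLinearMap.proj (R := ℝ) (φ := fun _ : Fin 3 => ℝ) 2)) q :=
    (hx.const_mul 2).add (hlog.const_mul a)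
  have hcos : HasFDerivAt (fun x => Real.cos (th a x))
      ((-Real.sin (th a q)) • ((2 : ℝ) • ContinuousLinearMap.proj (R := ℝ)
          (φ := fun _ : Fin 3 => ℝ) 0 +
        a • ((q 2)⁻¹ • ContinuousLinearMap.proj (R := ℝ) (φ := fun _ : Fin 3 => ℝ) 2))) q :=
    (Real.hasDerivAt_cos _).comp_hasFDerivAt q hth
  have hsin : HasFDerivAt (fun x => Real.sin (th a x))
      ((Real.cos (th a q)) • ((2 : ℝ) • ContinuousLinearMap.proj (R := ℝ)
          (φ := fun _ : Fin 3 => ℝ) 0 +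
        a • ((q 2)⁻¹ • ContinuousLinearMap.proj (R := ℝ) (φ := fun _ : Fin 3 => ℝ) 2))) q :=
    (Real.hasDerivAt_sin _).comp_hasFDerivAt q hth
  have H0 : HasFDerivAt (fun x => psi a x 0)
      (pd a q 0 0 • ContinuousLinearMap.proj (R := ℝ) (φ := fun _ : Fin 3 => ℝ) 0 +
        pd a q 0 1 • ContinuousLinearMap.proj (R := ℝ) (φ := fun _ : Fin 3 => ℝ) 1 +
        pd a q 0 2 • ContinuousLinearMap.proj (R := ℝ) (φ := fun _ : Fin 3 => ℝ) 2) q := by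
    have e : (fun x : Fin 3 → ℝ => psi a x 0) = fun x => rho a x * Real.cos (th a x) := by
      funext x; simp [psi]
    rw [e]
    refine (hrho.mul hcos).congr_fderiv ?_
    apply ContinuousLinearMap.ext; intro v
    simp only [pd, rho, ContinuousLinearMap.add_apply, ContinuousLinearMap.smul_apply,
      ContinuousLinearMap.neg_apply, ContinuousLinearMap.proj_apply, smul_eq_mul,
      Matrix.cons_val_zero, Matrix.cons_val_one, Matrix.head_cons, Matrix.cons_val_two,
      Matrix.tail_cons]
    field_simp
    ring
  have H1 : HasFDerivAt (fun x => psi a x 1)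
      (pd a q 1 0 • ContinuousLinearMap.proj (R := ℝ) (φ := fun _ : Fin 3 => ℝ) 0 +
        pd a q 1 1 • ContinuousLinearMap.proj (R := ℝ) (φ := fun _ : Fin 3 => ℝ) 1 +
        pd a q 1 2 • ContinuousLinearMap.proj (R := ℝ) (φ := fun _ : Fin 3 => ℝ) 2) q := by
    have e : (fun x : Fin 3 → ℝ => psi a x 1) = fun x => rho a x * Real.sin (th a x) := by
      funext x; simp [psi]
    rw [e]
    refine (hrho.mul hsin).congr_fderiv ?_
    apply ContinuousLinearMap.ext; intro v
    simp only [pd, rho, ContinuousLinearMap.add_apply, ContinuousLinearMap.smul_apply,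
      ContinuousLinearMap.neg_apply, ContinuousLinearMap.proj_apply, smul_eq_mul,
      Matrix.cons_val_zero, Matrix.cons_val_one, Matrix.head_cons, Matrix.cons_val_two,
      Matrix.tail_cons]
    field_simp
    ring
  have H2 : HasFDerivAt (fun x => psi a x 2)
      (pd a q 2 0 • ContinuousLinearMap.proj (R := ℝ) (φ := fun _ : Fin 3 => ℝ) 0 +
        pd a q 2 1 • ContinuousLinearMap.proj (R := ℝ) (φ := fun _ : Fin 3 => ℝ) 1 +
        pd a q 2 2 • ContinuousLinearMap.proj (R := ℝ) (φ := fun _ : Fin 3 => ℝ) 2) q := by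
    have e : (fun x : Fin 3 → ℝ => psi a x 2) = fun x => x 1 := by
      funext x; simp [psi]
    rw [e]
    convert hy using 1
    apply ContinuousLinearMap.ext; intro v
    simp [pd]
  apply hasFDerivAt_pi''
  intro i
  rw [ContinuousLinearMap.proj_pi]
  fin_cases i
  · exact H0
  · exact H1
  · exact H2

lemma Dmat_psi (a : ℝ) (q : Fin 3 → ℝ) (hq : 0 < q 2) :
    Dmat (psi a) q = pd a q := by
  have h := (hasFDeriv_psi a q hq).fderiv
  funext i j
  simp only [Dmat, h, ContinuousLinearMap.pi_apply, ContinuousLinearMap.add_apply,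
    ContinuousLinearMap.smul_apply, ContinuousLinearMap.proj_apply, smul_eq_mul]
  fin_cases j <;>
    simp [Pi.single_eq_same, Pi.single_eq_of_ne]

theorem stmt6 (a : ℝ) (ha : 0 < a)
    (W : Set (Fin 3 → ℝ)) (hWopen : IsOpen W) (hWz : ∀ p ∈ W, 0 < p 2) :
    IsLocConfFlat W (fun p =>
      Matrix.diagonal ![(p 2) ^ 2, Real.exp (2 * a * p 0) / (p 2) ^ 2, 1]) := by
  intro p hp
  have hpz : 0 < p 2 := hWz p hp
  set S2 : Set (Fin 3 → ℝ) := {q | 0 < q 2} with hS2def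
  have hS2open : IsOpen S2 := isOpen_lt continuous_const (continuous_apply 2)
  have hthC : ContinuousOn (th a) S2 := by
    intro q hq
    have hq2 : (0:ℝ) < q 2 := hq
    apply ContinuousAt.continuousWithinAt
    apply ContinuousAt.add
    · exact ((continuous_apply 0).continuousAt).const_mul 2
    · exact (ContinuousAt.comp (x := q) (Real.continuousAt_log hq2.ne')
        ((continuous_apply 2).continuousAt)).const_mul a
  refine ⟨(W ∩ S2) ∩ th a ⁻¹' Set.Ioo (th a p - 1) (th a p + 1), ?_, ?_, ?_, ?_⟩
  · exact (hthC.mono Set.inter_subset_right).isOpen_inter_preimage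
      (hWopen.inter hS2open) isOpen_Ioo
  · exact ⟨⟨hp, hpz⟩, by constructor <;> simp <;> linarith⟩
  · exact fun q hq => hq.1.1
  refine ⟨fun q => (q 2) ^ 2 * Real.exp (-(2 * a * q 0)), psi a, ?_, ?_, ?_, ?_, ?_⟩
  · -- smoothness of lam
    apply ContDiff.contDiffOn
    apply ContDiff.mul
    · exact (ContinuousLinearMap.proj (R := ℝ) (φ := fun _ : Fin 3 => ℝ) 2).contDiff.pow 2
    · exact Real.contDiff_exp.comp
        ((contDiff_const.mul
          (ContinuousLinearMap.proj (R := ℝ) (φ := fun _ : Fin 3 => ℝ) 0).contDiff).neg)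
  · -- positivity of lam
    intro q hq
    have hq2 : 0 < q 2 := hq.1.2
    positivity
  · -- smoothness of psi
    intro q hq
    have hq2 : 0 < q 2 := hq.1.2
    apply ContDiffAt.contDiffWithinAt
    rw [contDiffAt_pi]
    intro i
    have hproj0 : ContDiffAt ℝ ∞ (fun q : Fin 3 → ℝ => q 0) q :=
      (ContinuousLinearMap.proj (R := ℝ) (φ := fun _ : Fin 3 => ℝ) 0).contDiff.contDiffAt
    have hproj2 : ContDiffAt ℝ ∞ (fun q : Fin 3 → ℝ => q 2) q :=
      (ContinuousLinearMap.proj (R := ℝ) (φ := fun _ : Fin 3 => ℝ) 2).contDiff.contDiffAt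
    have hR : ContDiffAt ℝ ∞ (rho a) q := by
      apply ContDiffAt.mul
      apply ContDiffAt.mul
      · exact hproj2.pow 2
      · exact Real.contDiff_exp.contDiffAt.comp q ((contDiffAt_const.mul hproj0).neg)
      · exact contDiffAt_const
    have hT : ContDiffAt ℝ ∞ (th a) q := by
      apply ContDiffAt.add
      · exact contDiffAt_const.mul hproj0
      · have h : ContDiffAt ℝ ∞ (Real.log ∘ fun q : Fin 3 → ℝ => q 2) q :=
          (Real.contDiffAt_log.2 hq2.ne').comp q hproj2
        exact contDiffAt_const.mul h
    fin_cases i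
    · show ContDiffAt ℝ ∞ (fun x => psi a x 0) q
      have e : (fun x : Fin 3 → ℝ => psi a x 0) = fun x => rho a x * Real.cos (th a x) := by
        funext x; simp [psi]
      rw [e]; exact hR.mul (Real.contDiff_cos.contDiffAt.comp q hT)
    · show ContDiffAt ℝ ∞ (fun x => psi a x 1) q
      have e : (fun x : Fin 3 → ℝ => psi a x 1) = fun x => rho a x * Real.sin (th a x) := by
        funext x; simp [psi]
      rw [e]; exact hR.mul (Real.contDiff_sin.contDiffAt.comp q hT)
    · show ContDiffAt ℝ ∞ (fun x => psi a x 2) q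
      have e : (fun x : Fin 3 → ℝ => psi a x 2) = fun x => x 1 := by
        funext x; simp [psi]
      rw [e]
      exact (ContinuousLinearMap.proj (R := ℝ) (φ := fun _ : Fin 3 => ℝ) 1).contDiff.contDiffAt
  · -- injectivity
    intro q hq q' hq' heq
    have hq2 : 0 < q 2 := hq.1.2
    have hq'2 : 0 < q' 2 := hq'.1.2
    have h0 : rho a q * Real.cos (th a q) = rho a q' * Real.cos (th a q') := by
      simpa [psi] using congrFun heq 0
    have h1 : rho a q * Real.sin (th a q) = rho a q' * Real.sin (th a q') := by
      simpa [psi] using congrFun heq 1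
    have h2 : q 1 = q' 1 := by simpa [psi] using congrFun heq 2
    have hρq : 0 < rho a q := by
      unfold rho; positivity
    have hρq' : 0 < rho a q' := by
      unfold rho; positivity
    have hsc : Real.sin (th a q) ^ 2 + Real.cos (th a q) ^ 2 = 1 :=
      Real.sin_sq_add_cos_sq _
    have hsc' : Real.sin (th a q') ^ 2 + Real.cos (th a q') ^ 2 = 1 :=
      Real.sin_sq_add_cos_sq _
    have e0 : (rho a q * Real.cos (th a q)) ^ 2 =
        (rho a q' * Real.cos (th a q')) ^ 2 := by rw [h0]
    have e1 : (rho a q * Real.sin (th a q)) ^ 2 =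
        (rho a q' * Real.sin (th a q')) ^ 2 := by rw [h1]
    have esq : rho a q ^ 2 = rho a q' ^ 2 := by
      linear_combination e0 + e1 - (rho a q) ^ 2 * hsc + (rho a q') ^ 2 * hsc'
    have hρeq : rho a q = rho a q' := by
      rcases mul_eq_zero.1 (show (rho a q - rho a q') * (rho a q + rho a q') = 0 by
        linear_combination esq) with h | h
      · linarith
      · linarith
    rw [← hρeq] at h0 h1
    have hC : Real.cos (th a q) = Real.cos (th a q') := mul_left_cancel₀ hρq.ne' h0
    have hS : Real.sin (th a q) = Real.sin (th a q') := mul_left_cancel₀ hρq.ne' h1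
    have hcos1 : Real.cos (th a q - th a q') = 1 := by
      rw [Real.cos_sub, hC, hS]; linear_combination hsc'
    have hb : th a q ∈ Set.Ioo (th a p - 1) (th a p + 1) := hq.2
    have hb' : th a q' ∈ Set.Ioo (th a p - 1) (th a p + 1) := hq'.2
    have hπ := Real.pi_gt_three
    have hθ : th a q = th a q' := by
      have := (Real.cos_eq_one_iff_of_lt_of_lt
        (by cases hb; cases hb'; linarith) (by cases hb; cases hb'; linarith)).1 hcos1
      linarith
    have hzE : q 2 ^ 2 * Real.exp (-(a * q 0)) = q' 2 ^ 2 * Real.exp (-(a * q' 0)) := by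
      have h := hρeq
      unfold rho at h
      have hRne := sqrt_ne a
      field_simp at h
      linarith
    have hl : 2 * Real.log (q 2) - a * q 0 = 2 * Real.log (q' 2) - a * q' 0 := by
      have := congrArg Real.log hzE
      rw [Real.log_mul (by positivity) (Real.exp_ne_zero _),
        Real.log_mul (by positivity) (Real.exp_ne_zero _), Real.log_pow, Real.log_pow,
        Real.log_exp, Real.log_exp] at this
      push_cast at this
      linarith
    have hth' : 2 * q 0 + a * Real.log (q 2) = 2 * q' 0 + a * Real.log (q' 2) := hθ
    have h4 : (a ^ 2 + 4) ≠ 0 := by positivity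
    have hx0 : q 0 = q' 0 := by
      have key : (a ^ 2 + 4) * (q 0 - q' 0) = 0 := by linear_combination 2 * hth' - a * hl
      rcases mul_eq_zero.1 key with h | h
      · exact absurd h h4
      · linarith
    have hlz : Real.log (q 2) = Real.log (q' 2) := by
      have key : (a ^ 2 + 4) * (Real.log (q 2) - Real.log (q' 2)) = 0 := by
        linear_combination 2 * hl + a * hth'
      rcases mul_eq_zero.1 key with h | h
      · exact absurd h h4
      · linarith
    have hz2 : q 2 = q' 2 := by
      rw [← Real.exp_log hq2, ← Real.exp_log hq'2, hlz]
    funext i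
    fin_cases i
    · exact hx0
    · exact h2
    · exact hz2
  · -- metric equation
    intro q hq
    have hq2 : 0 < q 2 := hq.1.2
    rw [Dmat_psi a q hq2]
    have hRne := sqrt_ne a
    have hR2 : Real.sqrt (4 + a ^ 2) ^ 2 = 4 + a ^ 2 :=
      Real.sq_sqrt (by positivity)
    have hE2 : Real.exp (-(a * q 0)) * Real.exp (-(a * q 0)) = Real.exp (-(2 * a * q 0)) := by
      rw [← Real.exp_add]; ring_nf
    have hEe : Real.exp (-(2 * a * q 0)) * Real.exp (2 * a * q 0) = 1 := by
      rw [← Real.exp_add]; simp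
    have hsc : Real.sin (th a q) ^ 2 + Real.cos (th a q) ^ 2 = 1 :=
      Real.sin_sq_add_cos_sq _
    ext i j
    simp only [Matrix.mul_apply, Fin.sum_univ_three, Matrix.transpose_apply]
    fin_cases i <;> fin_cases j <;>
      simp [pd, rho, Matrix.mul_apply, Fin.sum_univ_three, Matrix.diagonal,
        Matrix.smul_apply, smul_eq_mul, Matrix.transpose_apply]
    · field_simp
      linear_combination (4 + a ^ 2) * Real.exp (-(a * q 0)) ^ 2 * hsc + (4 + a ^ 2) * hE2 -
          Real.exp (-(2 * a * q 0)) * hR2 - Real.sqrt (4 + a ^ 2) ^ 2 *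
          (congrArg Real.exp (by ring : -(a * q 0 * 2) = -(2 * a * q 0)))
    · ring
    · field_simp
      linear_combination -hEe
    · ring
    · have key : Real.sqrt (4 + a ^ 2) * Real.sqrt (4 + a ^ 2) = 4 + a ^ 2 :=
        Real.mul_self_sqrt (by positivity)
      field_simp
      linear_combination (4 + a ^ 2) * Real.exp (-(a * q 0)) ^ 2 * hsc + (4 + a ^ 2) * hE2 -
          Real.exp (-(2 * a * q 0)) * hR2 - Real.sqrt (4 + a ^ 2) ^ 2 *
          (congrArg Real.exp (by ring : -(a * q 0 * 2) = -(2 * a * q 0)))
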